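/- For d ≥ 2, the number of sets in Γ(n) := {R ⊆ ℤ^d : R connected, |R| = n, 0 ∈ R ∪ Int(R)} is at most e^n (3^d − 1)^{2n}. -/

import Mathlib

/-- Points of the lattice `ℤ^d`. -/
abbrev Pt (d : ℕ) := Fin d → ℤ

/-- Two lattice points are adjacent if they are distinct and at `L^∞`-distance at most 1
(i.e. exactly 1). -/
def adj {d : ℕ} (s t : Pt d) : Prop := s ≠ t ∧ ∀ i, |s i - t i| ≤ 1

/-- A set `R ⊆ ℤ^d` is connected if any two of its points are joined by a path inside `R`
whose consecutive points are at `L^∞`-distance 1. -/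
def connectedIn {d : ℕ} (R : Set (Pt d)) : Prop :=
  ∀ s ∈ R, ∀ t ∈ R, Relation.ReflTransGen (fun a b => a ∈ R ∧ b ∈ R ∧ adj a b) s t

/-- The external boundary `∂R = {s ∉ R : dist_∞(s, R) = 1}`. -/
def extBoundary {d : ℕ} (R : Set (Pt d)) : Set (Pt d) :=
  {s | s ∉ R ∧ ∃ t ∈ R, adj s t}

/-- The interior `Int R`: the union of the finite connected components of the complement. -/
def latticeInt {d : ℕ} (R : Set (Pt d)) : Set (Pt d) :=
  {s | s ∉ R ∧
    Set.Finite {t | Relation.ReflTransGen (fun a b => a ∉ R ∧ b ∉ R ∧ adj a b) s t}}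

namespace Animal

variable {d : ℕ}

/-- Weak adjacency: `L^∞`-distance at most 1 (equality allowed). -/
def near (a b : Pt d) : Prop := ∀ i, |a i - b i| ≤ 1

lemma near_refl (a : Pt d) : near a a := fun i => by simp

lemma near_symm {a b : Pt d} (h : near a b) : near b a := fun i => by
  rw [abs_sub_comm]; exact h i

/-- The connected component of `x` in the complement of `R`. -/
def comp (R : Set (Pt d)) (x : Pt d) : Set (Pt d) :=
  {t | Relation.ReflTransGen (fun a b => a ∉ R ∧ b ∉ R ∧ adj a b) x t}

lemma notMem_of_mem_comp {R : Set (Pt d)} {x t : Pt d} (hx : x ∉ R) (ht : t ∈ comp R x) :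
    t ∉ R := by
  induction ht with
  | refl => exact hx
  | tail _ h _ => exact h.2.1

lemma comp_subset_comp {R : Set (Pt d)} {x y : Pt d} (hy : y ∈ comp R x) :
    comp R y ⊆ comp R x := fun t ht => Relation.ReflTransGen.trans hy ht

/-- First coordinate basis vector. -/
def e1 (d : ℕ) : Pt d := fun j => if (j : ℕ) = 0 then 1 else 0

/-- Second coordinate basis vector. -/
def e2 (d : ℕ) : Pt d := fun j => if (j : ℕ) = 1 then 1 else 0

lemma e1_abs_le (j : Fin d) : |e1 d j| ≤ 1 := by unfold e1; split <;> simp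

lemma e2_abs_le (j : Fin d) : |e2 d j| ≤ 1 := by unfold e2; split <;> simp

lemma e1_ne_zero (hd : 0 < d) : e1 d ≠ 0 := by
  intro h
  have := congrFun h ⟨0, hd⟩
  simp [e1] at this

lemma e2_ne_zero (hd : 1 < d) : e2 d ≠ 0 := by
  intro h
  have := congrFun h ⟨1, hd⟩
  simp [e2] at this

/-- If the component of `x` in the complement of `R` is finite, a ray from `x` in a unit
direction `v` eventually hits `R`. -/
lemma ray_hits {R : Set (Pt d)} {x v : Pt d} (hx : x ∉ R) (hv1 : ∀ i, |v i| ≤ 1)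
    (hv0 : v ≠ 0) (hfin : (comp R x).Finite) : ∃ m : ℕ, x + ((m : ℤ) + 1) • v ∈ R := by
  by_contra hc
  push_neg at hc
  have hall : ∀ m : ℕ, x + (m : ℤ) • v ∉ R := by
    intro m
    cases m with
    | zero => simpa using hx
    | succ m => have := hc m; push_cast at this ⊢; exact this
  have hadj : ∀ m : ℕ, adj (x + (m : ℤ) • v) (x + ((m : ℤ) + 1) • v) := by
    intro m
    constructor
    · intro h
      apply hv0
      have : (m : ℤ) • v = ((m : ℤ) + 1) • v := by
        funext j
        have h2 := congrFun h j
        simp [add_smul] at h2 ⊢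
        linarith
      have h2 : ((m : ℤ) + 1) • v - (m : ℤ) • v = 0 := by rw [← this]; simp
      rw [← sub_smul] at h2
      simpa using h2
    · intro i
      have : (x + (m : ℤ) • v) i - (x + ((m : ℤ) + 1) • v) i = -v i := by
        simp only [Pi.add_apply, Pi.smul_apply, smul_eq_mul]; ring
      rw [this, abs_neg]
      exact hv1 i
  have hmem : ∀ m : ℕ, x + (m : ℤ) • v ∈ comp R x := by
    intro m
    induction m with
    | zero => simp; exact Relation.ReflTransGen.refl
    | succ m ih =>
        have step : (fun a b => a ∉ R ∧ b ∉ R ∧ adj a b) (x + (m : ℤ) • v)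
            (x + ((m : ℤ) + 1) • v) := ⟨hall m, by push_cast; exact hall (m + 1), hadj m⟩
        have := Relation.ReflTransGen.tail ih step
        push_cast
        exact this
  have hinj : Function.Injective (fun m : ℕ => x + (m : ℤ) • v) := by
    intro a b hab
    obtain ⟨j, hj⟩ := Function.ne_iff.mp hv0
    have hj' : v j ≠ 0 := by simpa using hj
    have h2 := congrFun hab j
    simp at h2
    rcases h2 with h2 | h2
    · exact h2
    · exact absurd h2 hj'
  exact (Set.infinite_of_injective_forall_mem hinj hmem) hfin


/-- Crossing lemma: a path inside `R` from a point of `S` to a point outside `S` crosses. -/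
lemma exists_crossing {R S : Set (Pt d)} {r t : Pt d} (hr : r ∈ S) (ht : t ∉ S)
    (hpath : Relation.ReflTransGen (fun a b => a ∈ R ∧ b ∈ R ∧ adj a b) r t) :
    ∃ u ∈ S, ∃ v ∈ R, v ∉ S ∧ near u v := by
  revert ht
  induction hpath with
  | refl => intro ht; exact absurd hr ht
  | tail _ h ih =>
      intro ht
      rename_i b c _
      by_cases hb : b ∈ S
      · exact ⟨b, hb, c, h.2.1, ht, h.2.2.2⟩
      · exact ih hb

/-- A walk-covering of a finite set: a list of length `2·|S| - 1` starting at `r`,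
with consecutive points `near`, visiting exactly `S`. -/
def Walkable (r : Pt d) (S : Finset (Pt d)) : Prop :=
  ∃ l : List (Pt d), l.head? = some r ∧ l.length = 2 * S.card - 1 ∧
    l.Chain' near ∧ l.toFinset = S

lemma walk_insert {l : List (Pt d)} {u v : Pt d} (hch : l.Chain' near) (hu : u ∈ l)
    (huv : near u v) :
    ∃ l' : List (Pt d), l'.Chain' near ∧ l'.length = l.length + 2 ∧
      l'.toFinset = insert v l.toFinset ∧ l'.head? = l.head? := by
  obtain ⟨l₁, l₂, rfl⟩ := List.append_of_mem hu
  refine ⟨l₁ ++ u :: v :: u :: l₂, ?_, by simp; omega, ?_, ?_⟩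
  · rw [List.Chain', List.isChain_append] at hch ⊢
    obtain ⟨h₁, h₂, h₃⟩ := hch
    refine ⟨h₁, ?_, ?_⟩
    · exact List.isChain_cons_cons.mpr ⟨huv, List.isChain_cons_cons.mpr ⟨near_symm huv, h₂⟩⟩
    · intro x hx y hy
      simp only [List.head?_cons, Option.mem_def, Option.some_inj] at hy
      subst hy
      exact h₃ x hx u (by simp)
  · ext x
    simp only [List.toFinset_append, List.toFinset_cons, Finset.mem_union, Finset.mem_insert,
      List.mem_toFinset]
    tauto
  · cases l₁ <;> simp

lemma walk_pad {l : List (Pt d)} (hne : l ≠ []) (hch : l.Chain' near) (m : ℕ) :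
    ∃ l' : List (Pt d), l'.length = l.length + m ∧ l'.Chain' near ∧
      l'.toFinset = l.toFinset ∧ l'.head? = l.head? := by
  induction m with
  | zero => exact ⟨l, by simp, hch, rfl, rfl⟩
  | succ m ih =>
      obtain ⟨l', hlen, hch', hts, hh⟩ := ih
      have hlne : l.length ≠ 0 := fun h0 => hne (List.length_eq_zero_iff.mp h0)
      have hne' : l' ≠ [] := by
        intro h
        rw [h] at hlen
        simp at hlen
        omega
      refine ⟨l' ++ [l'.getLast hne'], by simp [hlen]; ring, ?_, ?_, ?_⟩
      · rw [List.Chain', List.isChain_append]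
        refine ⟨hch', List.isChain_singleton _, ?_⟩
        intro x hx y hy
        simp only [List.head?_cons, Option.mem_def, Option.some_inj] at hy
        rw [List.getLast?_eq_getLast hne'] at hx
        simp only [Option.mem_def, Option.some_inj] at hx
        subst hx; subst hy
        exact near_refl _
      · rw [← hts, List.toFinset_append]
        simp only [List.toFinset_cons, List.toFinset_nil, insert_empty_eq]
        exact Finset.union_eq_left.mpr
          (Finset.singleton_subset_iff.mpr (List.mem_toFinset.mpr (List.getLast_mem hne')))
      · rw [← hh, List.head?_append_of_ne_nil _ hne']

lemma walkable_of_connected (R : Finset (Pt d)) (hconn : connectedIn (↑R : Set (Pt d))) {r : Pt d}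
    (hr : r ∈ R) : Walkable r R := by
  suffices h : ∀ m (S : Finset (Pt d)), S ⊆ R → r ∈ S → Walkable r S →
      R.card - S.card ≤ m → Walkable r R by
    refine h R.card {r} (Finset.singleton_subset_iff.mpr hr) (Finset.mem_singleton_self r)
      ⟨[r], by simp, by simp, List.isChain_singleton _, by simp⟩ (by omega)
  intro m
  induction m with
  | zero =>
      intro S hS hrS hw hc
      have hcard : R.card ≤ S.card := by
        have := Finset.card_le_card hS
        omega
      have : S = R := Finset.eq_of_subset_of_card_le hS hcard
      rwa [this] at hw
  | succ m ih =>
      intro S hS hrS hw hc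
      by_cases hSR : S = R
      · rwa [hSR] at hw
      · have hss : ∃ t ∈ R, t ∉ S := by
          by_contra hcon
          push_neg at hcon
          exact hSR (Finset.Subset.antisymm hS hcon)
        obtain ⟨t, htR, htS⟩ := hss
        have hpath := hconn r (hS hrS) t htR
        obtain ⟨u, huS, v, hvR, hvS, huv⟩ :=
          exists_crossing (S := (↑S : Set (Pt d))) (Finset.mem_coe.mpr hrS)
            (fun hc => htS (Finset.mem_coe.mp hc)) hpath
        obtain ⟨l, hh, hlen, hch, hts⟩ := hw
        have hul : u ∈ l := by
          rw [← List.mem_toFinset, hts]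
          exact_mod_cast huS
        obtain ⟨l', hch', hlen', hts', hh'⟩ := walk_insert hch hul huv
        have hvS' : v ∉ S := by exact_mod_cast hvS
        have hvR' : v ∈ R := by exact_mod_cast hvR
        have hcard1 : 1 ≤ S.card := Finset.card_pos.mpr ⟨r, hrS⟩
        refine ih (insert v S) (Finset.insert_subset hvR' hS)
          (Finset.mem_insert_of_mem hrS)
          ⟨l', by rw [hh', hh], ?_, hch', by rw [hts', hts]⟩ ?_
        · rw [hlen', hlen, Finset.card_insert_of_notMem hvS']
          omega
        · rw [Finset.card_insert_of_notMem hvS']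
          omega

/-- Extend an encoded step function to `ℕ`. -/
def steps (d n : ℕ) (f : Fin (2 * n) → Fin d → Fin 3) : ℕ → Pt d :=
  fun i j => if h : i < 2 * n then ((f ⟨i, h⟩ j : ℕ) : ℤ) - 1 else 0

/-- Partial sums of a walk. -/
def psum (x : Pt d) (g : ℕ → Pt d) : ℕ → Pt d
  | 0 => x
  | i + 1 => psum x g i + g i

/-- Decoding map. -/
def decode (d n : ℕ) (p : Fin (n + 1) × (Fin (2 * n) → Fin d → Fin 3)) : Finset (Pt d) :=
  (Finset.range (2 * n + 1)).image (psum (((p.1 : ℕ) : ℤ) • e1 d) (steps d n p.2))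

/-- Encoding of steps of a walk list. -/
def encodeF (d n : ℕ) (l : List (Pt d)) (hLen : l.length = 2 * n + 1) :
    Fin (2 * n) → Fin d → Fin 3 := fun i j =>
  ⟨(l.get ⟨(i : ℕ) + 1, by omega⟩ j - l.get ⟨(i : ℕ), by omega⟩ j + 1).toNat % 3,
    Nat.mod_lt _ (by norm_num)⟩

lemma steps_encodeF {n : ℕ} {l : List (Pt d)} (hch : l.Chain' near)
    (hLen : l.length = 2 * n + 1) {i : ℕ} (hi : i < 2 * n) (j : Fin d) :
    steps d n (encodeF d n l hLen) i j
      = l.get ⟨i + 1, by omega⟩ j - l.get ⟨i, by omega⟩ j := by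
  have hnear := List.isChain_iff_getElem.mp hch i (by omega)
  have habs := abs_le.mp (hnear j)
  simp only [steps, dif_pos hi, encodeF, List.get_eq_getElem]
  omega

lemma mem_range_decode {n : ℕ} (R : Finset (Pt d)) (hconn : connectedIn (↑R : Set (Pt d)))
    (hcard : R.card = n) (q : ℕ) (hq : q ≤ n) (hroot : ((q : ℤ) • e1 d) ∈ R) :
    R ∈ Set.range (decode d n) := by
  have hn : 0 < n := by
    rw [← hcard]
    exact Finset.card_pos.mpr ⟨_, hroot⟩
  obtain ⟨l, hh, hlen, hch, hts⟩ := walkable_of_connected R hconn hroot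
  have hlne : l ≠ [] := by
    intro h
    rw [h] at hh
    simp at hh
  obtain ⟨l', hlen', hch', hts', hh'⟩ := walk_pad hlne hch 2
  have hLen : l'.length = 2 * n + 1 := by
    rw [hlen', hlen, hcard]
    omega
  have hl'ne : l' ≠ [] := by
    intro h
    rw [h] at hLen
    simp at hLen
  have hhead : l'.head hl'ne = (q : ℤ) • e1 d := by
    rw [List.head?_eq_head hl'ne, hh] at hh'
    exact Option.some_inj.mp hh'
  have hkey : ∀ (i : ℕ) (hi : i < 2 * n + 1),
      psum ((q : ℤ) • e1 d) (steps d n (encodeF d n l' hLen)) i = l'.get ⟨i, by omega⟩ := by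
    intro i
    induction i with
    | zero =>
        intro _
        rw [psum, ← hhead]
        exact (List.get_mk_zero _).symm
    | succ i ih =>
        intro hi
        rw [psum, ih (by omega)]
        funext j
        rw [Pi.add_apply, steps_encodeF hch' hLen (by omega : i < 2 * n) j]
        ring
  refine ⟨⟨⟨q, by omega⟩, encodeF d n l' hLen⟩, ?_⟩
  show (Finset.range (2 * n + 1)).image
      (psum (((q : ℕ) : ℤ) • e1 d) (steps d n (encodeF d n l' hLen))) = R
  rw [← hts, ← hts']
  ext x
  simp only [Finset.mem_image, Finset.mem_range, List.mem_toFinset]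
  constructor
  · rintro ⟨i, hi, rfl⟩
    rw [hkey i hi]
    exact List.get_mem _ _
  · intro hx
    obtain ⟨⟨i, hi⟩, rfl⟩ := List.mem_iff_get.mp hx
    exact ⟨i, by omega, hkey i (by omega)⟩

open Classical in
lemma exists_root (hd : 2 ≤ d) (R : Finset (Pt d))
    (h0 : (0 : Pt d) ∈ (↑R : Set (Pt d)) ∪ latticeInt (↑R : Set (Pt d))) :
    ∃ q : ℕ, q ≤ R.card ∧ ((q : ℤ) • e1 d) ∈ R := by
  rcases h0 with h | h
  · refine ⟨0, Nat.zero_le _, ?_⟩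
    simpa using h
  · obtain ⟨h1, h2⟩ := h
    have h2' : (comp (↑R : Set (Pt d)) 0).Finite := h2
    -- hit along e1
    have hhit : ∃ m : ℕ, (0 : Pt d) + ((m : ℤ) + 1) • e1 d ∈ (↑R : Set (Pt d)) :=
      ray_hits h1 e1_abs_le (e1_ne_zero (by omega)) h2'
    have hhit' : ∃ m : ℕ, (((m : ℤ) + 1) • e1 d) ∈ R := by
      obtain ⟨m, hm⟩ := hhit
      exact ⟨m, by simpa using hm⟩
    set k := Nat.find hhit' + 1 with hk
    have hkR : ((k : ℤ) • e1 d) ∈ R := by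
      have := Nat.find_spec hhit'
      rw [hk]
      push_cast
      exact this
    have hnotR : ∀ j : ℕ, j < k → ((j : ℤ) • e1 d) ∉ (↑R : Set (Pt d)) := by
      intro j hj
      cases j with
      | zero => simpa using h1
      | succ m =>
          have hm : m < Nat.find hhit' := by omega
          have := Nat.find_min hhit' hm
          intro hcon
          apply this
          have : (((m : ℤ) + 1) • e1 d) ∈ R := by
            push_cast at hcon
            exact_mod_cast hcon
          exact this
    have hcomp : ∀ j : ℕ, j < k → ((j : ℤ) • e1 d) ∈ comp (↑R : Set (Pt d)) 0 := by
      intro j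
      induction j with
      | zero =>
          intro _
          have h00 : (((0 : ℕ) : ℤ) • e1 d) = (0 : Pt d) := by norm_num
          rw [h00]
          exact Relation.ReflTransGen.refl
      | succ j ih =>
          intro hj
          have hj' : j < k := by omega
          refine Relation.ReflTransGen.tail (ih hj') ?_
          refine ⟨hnotR j hj', by push_cast; exact hnotR (j + 1) (by exact_mod_cast hj), ?_, ?_⟩
          · intro hcon
            have := congrFun hcon ⟨0, by omega⟩
            simp [e1] at this
          · intro i
            have : ((j : ℤ) • e1 d) i - (((j : ℤ) + 1) • e1 d) i = -(e1 d i) := by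
              simp only [Pi.smul_apply, smul_eq_mul]; ring
            push_cast
            rw [this, abs_neg]
            exact e1_abs_le i
    -- each column j < k contains a point of R
    have hcol : ∀ j : Fin k, ∃ p : Pt d, p ∈ R ∧ p ⟨0, by omega⟩ = (j : ℤ) := by
      intro j
      have hjk : (j : ℕ) < k := j.2
      have hx : ((j : ℤ) • e1 d : Pt d) ∉ (↑R : Set (Pt d)) := hnotR j hjk
      have hfin : (comp (↑R : Set (Pt d)) ((j : ℤ) • e1 d)).Finite :=
        h2'.subset (comp_subset_comp (hcomp j hjk))
      obtain ⟨m, hm⟩ := ray_hits hx e2_abs_le (e2_ne_zero (by omega)) hfin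
      refine ⟨_, by exact_mod_cast hm, ?_⟩
      have h01 : (⟨0, by omega⟩ : Fin d) ≠ ⟨1, by omega⟩ := by
        intro hcon
        have := congrArg Fin.val hcon
        simp at this
      simp [e1, e2, Pi.add_apply]
    choose g hg1 hg2 using hcol
    have hkcard : k ≤ R.card := by
      have : (Finset.univ : Finset (Fin k)).card ≤ R.card := by
        apply Finset.card_le_card_of_injOn g (fun a _ => hg1 a)
        intro a _ b _ hab
        have := hg2 a
        rw [hab, hg2 b] at this
        exact Fin.ext (by exact_mod_cast this.symm)
      simpa using this
    exact ⟨k, hkcard, hkR⟩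

end Animal

theorem count_connected_sets_with_interior (d n : ℕ) (hd : 2 ≤ d) :
    (Set.ncard {R : Finset (Pt d) |
        connectedIn (↑R : Set (Pt d)) ∧ R.card = n ∧
          (0 : Pt d) ∈ (↑R : Set (Pt d)) ∪ latticeInt (↑R : Set (Pt d))} : ℝ)
      ≤ Real.exp n * ((3 : ℝ) ^ d - 1) ^ (2 * n) := by
  classical
  set Γ := {R : Finset (Pt d) |
      connectedIn (↑R : Set (Pt d)) ∧ R.card = n ∧
        (0 : Pt d) ∈ (↑R : Set (Pt d)) ∪ latticeInt (↑R : Set (Pt d))} with hΓ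
  -- Γ is covered by the range of the decoding map
  have hsub : Γ ⊆ Set.range (Animal.decode d n) := by
    intro R hR
    obtain ⟨hconn, hcard, h0⟩ := hR
    obtain ⟨q, hq, hroot⟩ := Animal.exists_root hd R h0
    exact Animal.mem_range_decode R hconn hcard q (hcard ▸ hq) hroot
  have hcount : Γ.ncard ≤ (n + 1) * (3 ^ d) ^ (2 * n) := by
    calc Γ.ncard ≤ (Set.range (Animal.decode d n)).ncard :=
          Set.ncard_le_ncard hsub (Set.finite_range _)
      _ ≤ (Set.univ : Set (Fin (n + 1) × (Fin (2 * n) → Fin d → Fin 3))).ncard := by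
          rw [← Set.image_univ]
          exact Set.ncard_image_le Set.finite_univ
      _ = (n + 1) * (3 ^ d) ^ (2 * n) := by
          rw [Set.ncard_univ, Nat.card_eq_fintype_card]
          simp [Fintype.card_fun, pow_mul]
  -- now the real-number estimate
  have hX : (9 : ℝ) ≤ (3 : ℝ) ^ d := by
    calc (9 : ℝ) = 3 ^ 2 := by norm_num
      _ ≤ (3 : ℝ) ^ d := by
          apply pow_le_pow_right₀ (by norm_num) hd
  have hE : (2.7182818283 : ℝ) ≤ Real.exp 1 := le_of_lt Real.exp_one_gt_d9
  have hbase : 2 * ((3 : ℝ) ^ d) ^ 2 ≤ Real.exp 1 * ((3 : ℝ) ^ d - 1) ^ 2 := by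
    set X := (3 : ℝ) ^ d
    nlinarith [sq_nonneg (X - 9), sq_nonneg X, hX, hE]
  have h2n : ((n : ℝ) + 1) ≤ 2 ^ n := by
    have := Nat.lt_two_pow_self (n := n)
    have : (n : ℝ) < 2 ^ n := by exact_mod_cast this
    -- n + 1 ≤ 2^n as naturals
    have hnat : n + 1 ≤ 2 ^ n := Nat.lt_two_pow_self
    exact_mod_cast hnat
  calc (Γ.ncard : ℝ) ≤ ((n + 1) * (3 ^ d) ^ (2 * n) : ℕ) := by exact_mod_cast hcount
    _ = ((n : ℝ) + 1) * (((3 : ℝ) ^ d) ^ 2) ^ n := by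
        push_cast
        rw [pow_mul]
    _ ≤ 2 ^ n * (((3 : ℝ) ^ d) ^ 2) ^ n := by
        apply mul_le_mul_of_nonneg_right h2n
        positivity
    _ = (2 * ((3 : ℝ) ^ d) ^ 2) ^ n := by rw [mul_pow]
    _ ≤ (Real.exp 1 * ((3 : ℝ) ^ d - 1) ^ 2) ^ n := by
        apply pow_le_pow_left₀ (by positivity) hbase
    _ = Real.exp n * ((3 : ℝ) ^ d - 1) ^ (2 * n) := by
        rw [mul_pow, Real.exp_one_pow, ← pow_mul, mul_comm 2 n]
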